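/- det A_n ≠ 0 and, for each j ∈ {1, …, n+1}, Cof_{1,j}[A_n]/det A_n = (∏_{k=2}^{j}(r_{j−1} − β_{k−1}) · ∏_{k=j+1}^{n+1}(β_{k−1} − r_{j−1})) / (∏_{k=1}^{j−1}(r_{j−1} − r_{k−1}) · ∏_{k=j+1}^{n+1}(r_{k−1} − r_{j−1})). In particular, Cof_{1,j}[A_n]/det A_n > 0 for every j ∈ {1, …, n+1}. -/

import Mathlib

open Finset Matrix

lemma nodal_erase_coeff_card {N : ℕ} (v : Fin (N + 1) → ℝ) (j : Fin (N + 1)) :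
    (Lagrange.basis Finset.univ v j).coeff N = Lagrange.nodalWeight Finset.univ v j := by
  have hb : Lagrange.basis Finset.univ v j =
      Polynomial.C (Lagrange.nodalWeight Finset.univ v j) *
        Lagrange.nodal (Finset.univ.erase j) v := by
    rw [Lagrange.basis, Lagrange.nodalWeight, Lagrange.nodal, map_prod, ← Finset.prod_mul_distrib]
    exact Finset.prod_congr rfl fun k _ => rfl
  have hdeg : (Lagrange.nodal (Finset.univ.erase j) v).natDegree = N := by
    rw [Lagrange.natDegree_nodal, Finset.card_erase_of_mem (Finset.mem_univ j)]
    simp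
  have h1 : (Lagrange.nodal (Finset.univ.erase j) v).coeff N = 1 := by
    have := (Lagrange.nodal_monic (s := Finset.univ.erase j) (v := v)).coeff_natDegree
    rwa [hdeg] at this
  rw [hb, Polynomial.coeff_C_mul, h1, mul_one]

lemma lag_sum_one {N : ℕ} (v : Fin (N + 1) → ℝ) (hv : Function.Injective v)
    (F : Polynomial ℝ) (hF : F.Monic) (hdeg : F.natDegree = N) :
    ∑ j : Fin (N + 1), F.eval (v j) * Lagrange.nodalWeight Finset.univ v j = 1 := by
  have hvs : Set.InjOn v (Finset.univ : Finset (Fin (N + 1))) := hv.injOn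
  have hdlt : F.degree < (#(Finset.univ : Finset (Fin (N + 1))) : ℕ) := by
    refine lt_of_le_of_lt (Polynomial.degree_le_natDegree) ?_
    rw [hdeg]
    simp only [Finset.card_univ, Fintype.card_fin]
    exact_mod_cast Nat.lt_succ_self N
  have hinterp := Lagrange.eq_interpolate (f := F) hvs hdlt
  have hco := congrArg (fun p => Polynomial.coeff p N) hinterp
  simp only [Lagrange.interpolate_apply, Polynomial.finset_sum_coeff,
    Polynomial.coeff_C_mul] at hco
  have hcN : F.coeff N = 1 := by have := hF.coeff_natDegree; rwa [hdeg] at this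
  rw [hcN] at hco
  rw [hco]
  refine Finset.sum_congr rfl fun j _ => ?_
  rw [nodal_erase_coeff_card]

lemma lag_sum_zero {N : ℕ} (v : Fin (N + 1) → ℝ) (hv : Function.Injective v)
    (F : Polynomial ℝ) (hdeg : F.natDegree ≤ N) (x : ℝ) (hx : ∀ k, x ≠ v k)
    (hFx : F.eval x = 0) :
    ∑ j : Fin (N + 1), Lagrange.nodalWeight Finset.univ v j * (x - v j)⁻¹ * F.eval (v j) = 0 := by
  have hvs : Set.InjOn v (Finset.univ : Finset (Fin (N + 1))) := hv.injOn
  have hdlt : F.degree < (#(Finset.univ : Finset (Fin (N + 1))) : ℕ) := by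
    refine lt_of_le_of_lt (Polynomial.degree_le_natDegree) ?_
    simp only [Finset.card_univ, Fintype.card_fin]
    exact_mod_cast Nat.lt_succ_of_le hdeg
  have hinterp := Lagrange.eq_interpolate (f := F) hvs hdlt
  have key := Lagrange.eval_interpolate_not_at_node (s := Finset.univ) (v := v) (x := x)
    (fun k => F.eval (v k)) (fun k _ => hx k)
  rw [← hinterp, hFx] at key
  have hnz : Polynomial.eval x (Lagrange.nodal Finset.univ v) ≠ 0 := by
    rw [Lagrange.eval_nodal]
    exact Finset.prod_ne_zero_iff.mpr fun k _ => sub_ne_zero_of_ne (hx k)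
  exact ((mul_eq_zero.mp key.symm).resolve_left hnz)

lemma poly_vanish {N : ℕ} (v u w : Fin (N + 1) → ℝ) (hw : Set.InjOn w (Finset.univ : Finset (Fin (N + 1))))
    (hz : ∀ i : Fin (N + 1),
      (∑ j : Fin (N + 1), u j * Polynomial.eval (w i) (Lagrange.nodal (Finset.univ.erase j) v)) = 0) :
    ∀ j : Fin (N + 1), u j * ∏ k ∈ Finset.univ.erase j, (v j - v k) = 0 := by
  classical
  set P : Polynomial ℝ :=
    ∑ j : Fin (N + 1), Polynomial.C (u j) * Lagrange.nodal (Finset.univ.erase j) v with hP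
  have hPdeg : P.degree < (#(Finset.univ : Finset (Fin (N + 1))) : ℕ) := by
    simp only [Finset.card_univ, Fintype.card_fin]
    refine lt_of_le_of_lt (Polynomial.degree_sum_le _ _) ?_
    rw [Finset.sup_lt_iff (by exact_mod_cast WithBot.bot_lt_coe (N + 1))]
    intro j _
    refine lt_of_le_of_lt (Polynomial.degree_mul_le _ _) ?_
    have h1 : (Lagrange.nodal (Finset.univ.erase j) v).degree = (N : ℕ) := by
      rw [Lagrange.degree_nodal, Finset.card_erase_of_mem (Finset.mem_univ j)]
      simp
    calc Polynomial.degree (Polynomial.C (u j)) +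
          (Lagrange.nodal (Finset.univ.erase j) v).degree
        ≤ 0 + (N : ℕ) := add_le_add Polynomial.degree_C_le (le_of_eq h1)
      _ = (N : ℕ) := by rw [zero_add]
      _ < ((N + 1 : ℕ) : WithBot ℕ) := by exact_mod_cast Nat.lt_succ_self N
  have hP0 : P = 0 := by
    refine Polynomial.eq_zero_of_degree_lt_of_eval_index_eq_zero (v := w) Finset.univ hw hPdeg ?_
    intro i _
    rw [hP]
    simp only [Polynomial.eval_finset_sum, Polynomial.eval_mul, Polynomial.eval_C]
    exact hz i
  intro j
  have := congrArg (Polynomial.eval (v j)) hP0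
  rw [hP] at this
  simp only [Polynomial.eval_finset_sum, Polynomial.eval_mul, Polynomial.eval_C,
    Polynomial.eval_zero] at this
  rw [Finset.sum_eq_single_of_mem j (Finset.mem_univ j)] at this
  · rw [← this, Lagrange.eval_nodal]
  · intro i _ hij
    have hj : j ∈ Finset.univ.erase i := Finset.mem_erase.mpr ⟨hij.symm, Finset.mem_univ j⟩
    rw [Lagrange.eval_nodal_at_node hj, mul_zero]

lemma prod_neg_sign {α : Type*} (s : Finset α) (f : α → ℝ) :
    ∏ k ∈ s, (-(f k)) = (-1) ^ (#s) * ∏ k ∈ s, f k := by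
  rw [← Finset.prod_const, ← Finset.prod_mul_distrib]
  exact Finset.prod_congr rfl fun k _ => by ring

lemma prod_erase_split {N : ℕ} (g : ℕ → ℝ) (j : Fin (N + 1)) :
    ∏ k ∈ Finset.univ.erase j, g (k : ℕ) =
      (∏ m ∈ Finset.range (j : ℕ), g m) * ∏ m ∈ Finset.Icc ((j : ℕ) + 1) N, g m := by
  have himg : (Finset.univ.erase j).image (Fin.val) = (Finset.range (N + 1)).erase (j : ℕ) := by
    ext m
    simp only [Finset.mem_image, Finset.mem_erase, Finset.mem_univ, and_true,
      Finset.mem_range]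
    constructor
    · rintro ⟨k, hk, rfl⟩
      exact ⟨fun h => hk (Fin.ext h), k.isLt⟩
    · rintro ⟨hne, hlt⟩
      exact ⟨⟨m, hlt⟩, fun h => hne (congrArg Fin.val h), rfl⟩
  have h1 : ∏ k ∈ Finset.univ.erase j, g (k : ℕ) =
      ∏ m ∈ (Finset.range (N + 1)).erase (j : ℕ), g m := by
    rw [← himg, Finset.prod_image]
    intro a _ b _ hab
    exact Fin.ext hab
  rw [h1]
  have hset : (Finset.range (N + 1)).erase (j : ℕ) =
      Finset.range (j : ℕ) ∪ Finset.Icc ((j : ℕ) + 1) N := by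
    have hjN : (j : ℕ) < N + 1 := j.isLt
    ext m
    simp only [Finset.mem_erase, Finset.mem_range, Finset.mem_union, Finset.mem_Icc]
    omega
  rw [hset, Finset.prod_union]
  rw [Finset.disjoint_left]
  intro m hm hm'
  simp only [Finset.mem_range] at hm
  simp only [Finset.mem_Icc] at hm'
  omega

/-- The (i,j) cofactor of a square matrix: (−1)^(i+j) times the determinant of the
submatrix obtained by deleting row `i` and column `j`. -/
noncomputable def cof {n : ℕ} (M : Matrix (Fin (n + 1)) (Fin (n + 1)) ℝ)
    (i j : Fin (n + 1)) : ℝ :=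
  (-1 : ℝ) ^ ((i : ℕ) + (j : ℕ)) * (M.submatrix i.succAbove j.succAbove).det

theorem stmt0 (n : ℕ) (hn : 1 ≤ n) (β r : ℕ → ℝ)
    (hr0 : 0 < r 0)
    (hinter : ∀ k, 1 ≤ k → k ≤ n → r (k - 1) < β k ∧ β k < r k)
    (A : Matrix (Fin (n + 1)) (Fin (n + 1)) ℝ)
    (hA : ∀ i j : Fin (n + 1), A i j = if (i : ℕ) = 0 then 1 else β i / (β i - r j)) :
    A.det ≠ 0 ∧
      ∀ j : Fin (n + 1),
        cof A 0 j / A.det =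
          ((∏ k ∈ Finset.Icc 1 (j : ℕ), (r j - β k)) *
              ∏ k ∈ Finset.Icc ((j : ℕ) + 1) n, (β k - r j)) /
            ((∏ k ∈ Finset.range (j : ℕ), (r j - r k)) *
              ∏ k ∈ Finset.Icc ((j : ℕ) + 1) n, (r k - r j)) ∧
        0 < cof A 0 j / A.det := by
  classical
  -- basic order facts
  have hrr : ∀ k, k < n → r k < r (k + 1) := by
    intro k hk
    have h := hinter (k + 1) (by omega) (by omega)
    simpa using lt_trans h.1 h.2
  have hrle : ∀ k l, k ≤ l → l ≤ n → r k ≤ r l := by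
    intro k l hkl hln
    obtain ⟨d, rfl⟩ := Nat.exists_eq_add_of_le hkl
    clear hkl
    induction d with
    | zero => simp
    | succ m ih =>
      have h1 : r k ≤ r (k + m) := ih (by omega)
      have h2 : r (k + m) < r (k + m + 1) := hrr _ (by omega)
      calc r k ≤ r (k + m) := h1
        _ ≤ r (k + (m + 1)) := by rw [← Nat.add_assoc]; exact le_of_lt h2
  have hrlt : ∀ k l, k < l → l ≤ n → r k < r l := by
    intro k l hkl hln
    have h1 : r k ≤ r (l - 1) := hrle k (l - 1) (by omega) (by omega)
    have h2 : r (l - 1) < r l := by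
      have := hrr (l - 1) (by omega)
      rwa [Nat.sub_add_cancel (by omega : 1 ≤ l)] at this
    exact lt_of_le_of_lt h1 h2
  have hrpos : ∀ k, k ≤ n → 0 < r k := fun k hk =>
    lt_of_lt_of_le hr0 (hrle 0 k (Nat.zero_le k) hk)
  have hβr : ∀ j k, 1 ≤ k → k ≤ j → j ≤ n → β k < r j := by
    intro j k h1 h2 h3
    exact lt_of_lt_of_le (hinter k h1 (le_trans h2 h3)).2 (hrle k j h2 h3)
  have hrβ : ∀ j k, j < k → k ≤ n → r j < β k := by
    intro j k h1 h2
    exact lt_of_le_of_lt (hrle j (k - 1) (by omega) (by omega)) (hinter k (by omega) h2).1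
  have hβpos : ∀ k, 1 ≤ k → k ≤ n → 0 < β k := by
    intro k h1 h2
    exact lt_trans (hrpos (k - 1) (by omega)) (hinter k h1 h2).1
  have hβmono : ∀ k l, 1 ≤ k → k < l → l ≤ n → β k < β l := by
    intro k l h1 h2 h3
    calc β k < r k := (hinter k h1 (by omega)).2
      _ < β l := hrβ k l h2 h3
  -- Lagrange setup
  set v : Fin (n + 1) → ℝ := fun k => r k with hv
  have hvinj : Function.Injective v := by
    intro a b hab
    by_contra hne
    rcases lt_or_gt_of_ne (fun h : (a : ℕ) = (b : ℕ) => hne (Fin.ext h)) with h | h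
    · exact absurd hab (ne_of_lt (hrlt a b h (Nat.lt_succ_iff.mp b.isLt)))
    · exact absurd hab.symm (ne_of_lt (hrlt b a h (Nat.lt_succ_iff.mp a.isLt)))
  set F : Polynomial ℝ := ∏ k ∈ Finset.Icc 1 n, (Polynomial.X - Polynomial.C (β k)) with hFdef
  have hFmonic : F.Monic := Polynomial.monic_prod_of_monic _ _ fun k _ => Polynomial.monic_X_sub_C _
  have hFdeg : F.natDegree = n := by
    rw [hFdef, Polynomial.natDegree_prod _ _ fun k _ => Polynomial.X_sub_C_ne_zero (β k)]
    simp [Polynomial.natDegree_X_sub_C]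
  have hFeval : ∀ x : ℝ, F.eval x = ∏ k ∈ Finset.Icc 1 n, (x - β k) := by
    intro x; rw [hFdef]; simp [Polynomial.eval_prod]
  set c : Fin (n + 1) → ℝ := fun j => F.eval (v j) * Lagrange.nodalWeight Finset.univ v j with hc
  have h1 : ∑ j : Fin (n + 1), c j = 1 := lag_sum_one v hvinj F hFmonic hFdeg
  have hβnev : ∀ i : ℕ, 1 ≤ i → i ≤ n → ∀ k : Fin (n + 1), β i ≠ v k := by
    intro i hi1 hin k
    rcases Nat.lt_or_ge (k : ℕ) i with h | h
    · exact ne_of_gt (lt_of_le_of_lt (hrle k (i - 1) (by omega) (by omega)) (hinter i hi1 hin).1)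
    · exact ne_of_lt (lt_of_lt_of_le (hinter i hi1 hin).2 (hrle i k h (Nat.lt_succ_iff.mp k.isLt)))
  have h2 : ∀ i : ℕ, 1 ≤ i → i ≤ n → ∑ j : Fin (n + 1), c j * (β i - v j)⁻¹ = 0 := by
    intro i hi1 hin
    have hFx : F.eval (β i) = 0 := by
      rw [hFeval]
      exact Finset.prod_eq_zero (Finset.mem_Icc.mpr ⟨hi1, hin⟩) (sub_self (β i))
    have := lag_sum_zero v hvinj F (le_of_eq hFdeg) (β i) (hβnev i hi1 hin) hFx
    rw [← this]
    exact Finset.sum_congr rfl fun j _ => by rw [hc]; ring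
  -- A *ᵥ c = e₀
  have hAc : A *ᵥ c = Pi.single (0 : Fin (n + 1)) 1 := by
    funext i
    by_cases hi : (i : ℕ) = 0
    · have hi0 : i = 0 := Fin.ext hi
      subst hi0
      have hterm : ∀ j : Fin (n + 1), A 0 j * c j = c j := by
        intro j; rw [hA]; simp
      rw [Matrix.mulVec, dotProduct, Finset.sum_congr rfl fun j _ => hterm j, h1,
        Pi.single_eq_same]
    · have hi1 : 1 ≤ (i : ℕ) := Nat.one_le_iff_ne_zero.mpr hi
      have hin : (i : ℕ) ≤ n := Nat.lt_succ_iff.mp i.isLt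
      have hterm : ∀ j : Fin (n + 1), A i j * c j = β i * (c j * (β i - v j)⁻¹) := by
        intro j
        rw [hA, if_neg hi, div_eq_mul_inv]
        ring
      rw [Matrix.mulVec, dotProduct, Finset.sum_congr rfl fun j _ => hterm j,
        ← Finset.mul_sum, h2 i hi1 hin, mul_zero,
        Pi.single_eq_of_ne (fun h => hi (by rw [h]; rfl)) 1]
  -- det ≠ 0
  have hdet : A.det ≠ 0 := by
    intro h0
    obtain ⟨u, hu, hAu⟩ := Matrix.exists_mulVec_eq_zero_iff.mpr h0
    have hrow : ∀ i : Fin (n + 1), ∑ jj : Fin (n + 1), A i jj * u jj = 0 := by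
      intro i
      have h := congrFun hAu i
      rwa [Matrix.mulVec, dotProduct] at h
    have hrow0 : ∑ jj : Fin (n + 1), u jj = 0 := by
      have h := hrow 0
      simpa [hA] using h
    have hrowi : ∀ i : Fin (n + 1), (i : ℕ) ≠ 0 →
        ∑ jj : Fin (n + 1), β (i : ℕ) / (β (i : ℕ) - r (jj : ℕ)) * u jj = 0 := by
      intro i hi
      have h := hrow i
      simpa [hA, hi] using h
    set w : Fin (n + 1) → ℝ := fun i => if (i : ℕ) = 0 then 0 else β (i : ℕ) with hw
    have hwinj : Set.InjOn w (Finset.univ : Finset (Fin (n + 1))) := by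
      intro a _ b _ hab
      simp only [hw] at hab
      by_cases ha : (a : ℕ) = 0 <;> by_cases hb : (b : ℕ) = 0
      · exact Fin.ext (by rw [ha, hb])
      · rw [if_pos ha, if_neg hb] at hab
        exact absurd hab.symm (ne_of_gt (hβpos b (by omega) (Nat.lt_succ_iff.mp b.isLt)))
      · rw [if_neg ha, if_pos hb] at hab
        exact absurd hab (ne_of_gt (hβpos a (by omega) (Nat.lt_succ_iff.mp a.isLt)))
      · rw [if_neg ha, if_neg hb] at hab
        by_contra hne
        rcases lt_or_gt_of_ne (fun h : (a : ℕ) = (b : ℕ) => hne (Fin.ext h)) with h | h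
        · exact absurd hab (ne_of_lt (hβmono a b (by omega) h (Nat.lt_succ_iff.mp b.isLt)))
        · exact absurd hab.symm (ne_of_lt (hβmono b a (by omega) h (Nat.lt_succ_iff.mp a.isLt)))
    have hz : ∀ i : Fin (n + 1),
        (∑ jj : Fin (n + 1), (u jj * r (jj : ℕ)) *
          Polynomial.eval (w i) (Lagrange.nodal (Finset.univ.erase jj) v)) = 0 := by
      intro i
      by_cases hi : (i : ℕ) = 0
      · have hw0 : w i = 0 := by simp only [hw]; rw [if_pos hi]
        rw [hw0]
        have hterm : ∀ jj : Fin (n + 1), (u jj * r (jj : ℕ)) *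
            Polynomial.eval 0 (Lagrange.nodal (Finset.univ.erase jj) v) =
            ((-1 : ℝ) ^ n * ∏ k : Fin (n + 1), v k) * u jj := by
          intro jj
          rw [Lagrange.eval_nodal]
          have hflip : ∏ k ∈ Finset.univ.erase jj, ((0 : ℝ) - v k) =
              (-1 : ℝ) ^ n * ∏ k ∈ Finset.univ.erase jj, v k := by
            have h := prod_neg_sign (Finset.univ.erase jj) (fun k => v k)
            simp only [zero_sub]
            rw [h, Finset.card_erase_of_mem (Finset.mem_univ jj)]
            simp
          rw [hflip]
          have hmp : v jj * ∏ k ∈ Finset.univ.erase jj, v k = ∏ k : Fin (n + 1), v k :=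
            Finset.mul_prod_erase Finset.univ v (Finset.mem_univ jj)
          calc (u jj * r (jj : ℕ)) * ((-1 : ℝ) ^ n * ∏ k ∈ Finset.univ.erase jj, v k)
              = (-1 : ℝ) ^ n * (v jj * ∏ k ∈ Finset.univ.erase jj, v k) * u jj := by
                simp only [hv]; ring
            _ = ((-1 : ℝ) ^ n * ∏ k : Fin (n + 1), v k) * u jj := by rw [hmp]
        rw [Finset.sum_congr rfl fun jj _ => hterm jj, ← Finset.mul_sum, hrow0, mul_zero]
      · have hi1 : 1 ≤ (i : ℕ) := by omega
        have hin : (i : ℕ) ≤ n := Nat.lt_succ_iff.mp i.isLt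
        have hwi : w i = β (i : ℕ) := by simp only [hw]; rw [if_neg hi]
        rw [hwi]
        have hne : ∀ k : Fin (n + 1), β (i : ℕ) - v k ≠ 0 := fun k =>
          sub_ne_zero_of_ne (hβnev (i : ℕ) hi1 hin k)
        have hterm : ∀ jj : Fin (n + 1), (u jj * r (jj : ℕ)) *
            Polynomial.eval (β (i : ℕ)) (Lagrange.nodal (Finset.univ.erase jj) v) =
            (∏ k : Fin (n + 1), (β (i : ℕ) - v k)) *
              (β (i : ℕ) / (β (i : ℕ) - r (jj : ℕ)) * u jj - u jj) := by
          intro jj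
          rw [Lagrange.eval_nodal]
          have hsp : ∏ k ∈ Finset.univ.erase jj, (β (i : ℕ) - v k) =
              (β (i : ℕ) - v jj)⁻¹ * ∏ k : Fin (n + 1), (β (i : ℕ) - v k) := by
            rw [← Finset.mul_prod_erase Finset.univ (fun k => β (i : ℕ) - v k)
              (Finset.mem_univ jj), ← mul_assoc, inv_mul_cancel₀ (hne jj), one_mul]
          rw [hsp]
          have hnejj := hne jj
          simp only [hv] at hnejj ⊢
          field_simp
          ring
        rw [Finset.sum_congr rfl fun jj _ => hterm jj, ← Finset.mul_sum,
          Finset.sum_sub_distrib, hrowi i hi, hrow0, sub_zero, mul_zero]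
    have key := poly_vanish v (fun jj => u jj * r (jj : ℕ)) w hwinj hz
    have hu0 : u = 0 := by
      funext jj
      have h := key jj
      have hprod : ∏ k ∈ Finset.univ.erase jj, (v jj - v k) ≠ 0 := by
        apply Finset.prod_ne_zero_iff.mpr
        intro k hk
        have hkj : k ≠ jj := (Finset.mem_erase.mp hk).1
        exact sub_ne_zero_of_ne fun hh => hkj (hvinj hh).symm
      have hrj : r (jj : ℕ) ≠ 0 := ne_of_gt (hrpos (jj : ℕ) (Nat.lt_succ_iff.mp jj.isLt))
      have h2 := (mul_eq_zero.mp h).resolve_right hprod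
      have h3 := (mul_eq_zero.mp h2).resolve_right hrj
      simpa using h3
    exact hu hu0
  -- cofactor formula
  have hcof : ∀ j : Fin (n + 1), cof A 0 j / A.det = c j := by
    intro j
    have h1' : A.adjugate *ᵥ (A *ᵥ c) = A.det • c := by
      rw [Matrix.mulVec_mulVec, Matrix.adjugate_mul, Matrix.smul_mulVec,
        Matrix.one_mulVec]
    rw [hAc] at h1'
    have h2' := congrFun h1' j
    rw [Matrix.mulVec_single] at h2'
    simp only [Pi.smul_apply, smul_eq_mul, op_smul_eq_mul, Matrix.col_apply, mul_one] at h2'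
    have h3 : cof A 0 j = A.adjugate j 0 := by
      rw [cof, Matrix.adjugate_fin_succ_eq_det_submatrix]
    rw [h3, h2', mul_comm, mul_div_assoc, div_self hdet, mul_one]
  -- value of c
  have hcval : ∀ j : Fin (n + 1), c j =
      ((∏ k ∈ Finset.Icc 1 (j : ℕ), (r j - β k)) *
          ∏ k ∈ Finset.Icc ((j : ℕ) + 1) n, (β k - r j)) /
        ((∏ k ∈ Finset.range (j : ℕ), (r j - r k)) *
          ∏ k ∈ Finset.Icc ((j : ℕ) + 1) n, (r k - r j)) := by
    intro j
    have hjn : (j : ℕ) ≤ n := Nat.lt_succ_iff.mp j.isLt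
    set m := #(Finset.Icc ((j : ℕ) + 1) n) with hm
    have hsplitβ : Polynomial.eval (v j) F =
        (∏ k ∈ Finset.Icc 1 (j : ℕ), (r (j : ℕ) - β k)) *
          ((-1 : ℝ) ^ m * ∏ k ∈ Finset.Icc ((j : ℕ) + 1) n, (β k - r (j : ℕ))) := by
      rw [hFeval]
      have hflip : ∏ k ∈ Finset.Icc ((j : ℕ) + 1) n, (r (j : ℕ) - β k) =
          (-1 : ℝ) ^ m * ∏ k ∈ Finset.Icc ((j : ℕ) + 1) n, (β k - r (j : ℕ)) := by
        have h := prod_neg_sign (Finset.Icc ((j : ℕ) + 1) n) (fun k => β k - r (j : ℕ))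
        simp only [neg_sub] at h
        rw [h, hm]
      rw [← hflip]
      have e1 : Finset.Icc 1 n = Finset.Ioc 0 n := Finset.Icc_add_one_left_eq_Ioc 0 n
      have e2 : Finset.Icc 1 (j : ℕ) = Finset.Ioc 0 (j : ℕ) := Finset.Icc_add_one_left_eq_Ioc 0 (j : ℕ)
      have e3 : Finset.Icc ((j : ℕ) + 1) n = Finset.Ioc (j : ℕ) n := Finset.Icc_add_one_left_eq_Ioc (j : ℕ) n
      rw [e2, e3, Finset.prod_Ioc_consecutive _ (Nat.zero_le _) hjn, ← e1]
    have hW : Lagrange.nodalWeight Finset.univ v j =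
        ((∏ k ∈ Finset.range (j : ℕ), (r (j : ℕ) - r k)) *
          ((-1 : ℝ) ^ m * ∏ k ∈ Finset.Icc ((j : ℕ) + 1) n, (r k - r (j : ℕ))))⁻¹ := by
      have hflip : ∏ k ∈ Finset.Icc ((j : ℕ) + 1) n, (r (j : ℕ) - r k) =
          (-1 : ℝ) ^ m * ∏ k ∈ Finset.Icc ((j : ℕ) + 1) n, (r k - r (j : ℕ)) := by
        have h := prod_neg_sign (Finset.Icc ((j : ℕ) + 1) n) (fun k => r k - r (j : ℕ))
        simp only [neg_sub] at h
        rw [h, hm]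
      rw [Lagrange.nodalWeight, Finset.prod_inv_distrib, ← hflip,
        ← prod_erase_split (fun k => r (j : ℕ) - r k) j]
    have hD1 : (∏ k ∈ Finset.range (j : ℕ), (r (j : ℕ) - r k)) ≠ 0 := by
      apply ne_of_gt
      apply Finset.prod_pos
      intro k hk
      rw [Finset.mem_range] at hk
      exact sub_pos.mpr (hrlt k j hk hjn)
    have hD2 : (∏ k ∈ Finset.Icc ((j : ℕ) + 1) n, (r k - r (j : ℕ))) ≠ 0 := by
      apply ne_of_gt
      apply Finset.prod_pos
      intro k hk
      rw [Finset.mem_Icc] at hk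
      exact sub_pos.mpr (hrlt j k (by omega) hk.2)
    have hs : ((-1 : ℝ) ^ m) ≠ 0 := pow_ne_zero _ (by norm_num)
    show Polynomial.eval (v j) F * Lagrange.nodalWeight Finset.univ v j = _
    rw [hsplitβ, hW]
    field_simp
  refine ⟨hdet, fun j => ?_⟩
  have hjn : (j : ℕ) ≤ n := Nat.lt_succ_iff.mp j.isLt
  have hpos : 0 < ((∏ k ∈ Finset.Icc 1 (j : ℕ), (r j - β k)) *
          ∏ k ∈ Finset.Icc ((j : ℕ) + 1) n, (β k - r j)) /
        ((∏ k ∈ Finset.range (j : ℕ), (r j - r k)) *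
          ∏ k ∈ Finset.Icc ((j : ℕ) + 1) n, (r k - r j)) := by
    apply div_pos
    · apply mul_pos
      · apply Finset.prod_pos
        intro k hk
        rw [Finset.mem_Icc] at hk
        exact sub_pos.mpr (hβr j k hk.1 hk.2 hjn)
      · apply Finset.prod_pos
        intro k hk
        rw [Finset.mem_Icc] at hk
        exact sub_pos.mpr (hrβ j k (by omega) hk.2)
    · apply mul_pos
      · apply Finset.prod_pos
        intro k hk
        rw [Finset.mem_range] at hk
        exact sub_pos.mpr (hrlt k j hk hjn)
      · apply Finset.prod_pos
        intro k hk
        rw [Finset.mem_Icc] at hk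
        exact sub_pos.mpr (hrlt j k (by omega) hk.2)
  refine ⟨by rw [hcof j, hcval j], ?_⟩
  rw [hcof j, hcval j]
  exact hpos
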